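/- Let M be an A-module algebra over a weak *-Hopf algebra A, let N = M^A, and let l ∈ A be a left integral; define E_l : M → M by E_l(m) := l▷m. Then: (i) E_l(M) ⊆ N and E_l(n·m·n') = n·E_l(m)·n' for all n, n' ∈ N and m ∈ M; (ii) for every d ∈ A_L the element l·d is again a left integral and E_{l·d}(m) = E_l((d▷1_M)·m), while for every d ∈ A_R one has E_{l·d}(m) = E_l(m·(d▷1_M)); (iii) E_l(1_M) = (Σ l₍₁₎·S(l₍₂₎))▷1_M, and this element lies in C(N)∩M_R (C(N) the center of N); in particular, if Σ l₍₁₎·S(l₍₂₎) = 1 (l is normalized) then E_l(1_M) = 1_M, E_l restricts to the identity on N, and E_l is an idempotent projection of M onto N. -/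

import Mathlib

open scoped TensorProduct

noncomputable section

/-- The componentwise star operation on a tensor product of star algebras,
as an additive map (it is conjugate-linear, hence not a `LinearMap`). -/
def tensorStar (A B : Type) [Ring A] [Algebra ℂ A] [StarRing A] [StarModule ℂ A]
    [Ring B] [Algebra ℂ B] [StarRing B] [StarModule ℂ B] :
    A ⊗[ℂ] B →+ A ⊗[ℂ] B :=
  TensorProduct.liftAddHom
    (AddMonoidHom.mk'
      (fun a => AddMonoidHom.mk' (fun b => star a ⊗ₜ[ℂ] star b)
        (fun x y => by
          show star a ⊗ₜ[ℂ] star (x + y) = star a ⊗ₜ[ℂ] star x + star a ⊗ₜ[ℂ] star y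
          rw [star_add, TensorProduct.tmul_add]))
      (fun x y => by
        ext b
        show star (x + y) ⊗ₜ[ℂ] star b = star x ⊗ₜ[ℂ] star b + star y ⊗ₜ[ℂ] star b
        rw [star_add, TensorProduct.add_tmul]))
    (fun r a b => by
      show star (r • a) ⊗ₜ[ℂ] star b = star a ⊗ₜ[ℂ] star (r • b)
      rw [star_smul, star_smul, TensorProduct.smul_tmul])

/-- A finite dimensional weak `*`-Hopf algebra over `ℂ` (axioms of [BNS]),
together with the derived properties of the antipode (which follow from the
axioms and are included as fields for convenience). -/
structure WeakHopfAlgebra (A : Type) [Ring A] [Algebra ℂ A] [StarRing A] [StarModule ℂ A] where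
  Δ : A →ₗ[ℂ] A ⊗[ℂ] A
  ε : A →ₗ[ℂ] ℂ
  S : A →ₗ[ℂ] A
  Sinv : A →ₗ[ℂ] A
  finite : FiniteDimensional ℂ A
  Δ_mul : ∀ x y : A, Δ (x * y) = Δ x * Δ y
  Δ_star : ∀ x : A, Δ (star x) = tensorStar A A (Δ x)
  coassoc : ∀ x : A,
    (TensorProduct.assoc ℂ A A A) ((TensorProduct.map Δ (LinearMap.id : A →ₗ[ℂ] A)) (Δ x))
      = (TensorProduct.map (LinearMap.id : A →ₗ[ℂ] A) Δ) (Δ x)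
  counit_left : ∀ x : A,
    (TensorProduct.lid ℂ A) ((TensorProduct.map ε (LinearMap.id : A →ₗ[ℂ] A)) (Δ x)) = x
  counit_right : ∀ x : A,
    (TensorProduct.rid ℂ A) ((TensorProduct.map (LinearMap.id : A →ₗ[ℂ] A) ε) (Δ x)) = x
  unit_weak :
    (Δ 1 ⊗ₜ[ℂ] (1 : A)) * ((TensorProduct.assoc ℂ A A A).symm ((1 : A) ⊗ₜ[ℂ] Δ 1))
      = (TensorProduct.map Δ (LinearMap.id : A →ₗ[ℂ] A)) (Δ 1)
  unit_weak' :
    ((TensorProduct.assoc ℂ A A A).symm ((1 : A) ⊗ₜ[ℂ] Δ 1)) * (Δ 1 ⊗ₜ[ℂ] (1 : A))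
      = (TensorProduct.map Δ (LinearMap.id : A →ₗ[ℂ] A)) (Δ 1)
  counit_weak : ∀ x y z : A,
    ε (x * y * z) = (TensorProduct.lid ℂ ℂ)
      ((TensorProduct.map (ε ∘ₗ LinearMap.mulLeft ℂ x) (ε ∘ₗ LinearMap.mulRight ℂ z)) (Δ y))
  counit_weak' : ∀ x y z : A,
    ε (x * y * z) = (TensorProduct.lid ℂ ℂ)
      ((TensorProduct.map (ε ∘ₗ LinearMap.mulRight ℂ z) (ε ∘ₗ LinearMap.mulLeft ℂ x)) (Δ y))
  antipode_left : ∀ x : A,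
    LinearMap.mul' ℂ A ((TensorProduct.map S (LinearMap.id : A →ₗ[ℂ] A)) (Δ x))
      = (TensorProduct.rid ℂ A)
          ((TensorProduct.map (LinearMap.id : A →ₗ[ℂ] A) (ε ∘ₗ LinearMap.mulLeft ℂ x)) (Δ 1))
  antipode_right : ∀ x : A,
    LinearMap.mul' ℂ A ((TensorProduct.map (LinearMap.id : A →ₗ[ℂ] A) S) (Δ x))
      = (TensorProduct.lid ℂ A)
          ((TensorProduct.map (ε ∘ₗ LinearMap.mulRight ℂ x) (LinearMap.id : A →ₗ[ℂ] A)) (Δ 1))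
  antipode_mid : ∀ x : A,
    LinearMap.mul' ℂ A
      ((TensorProduct.map (LinearMap.mul' ℂ A ∘ₗ TensorProduct.map S (LinearMap.id : A →ₗ[ℂ] A)) S)
        ((TensorProduct.map Δ (LinearMap.id : A →ₗ[ℂ] A)) (Δ x))) = S x
  S_Sinv : ∀ x : A, S (Sinv x) = x
  Sinv_S : ∀ x : A, Sinv (S x) = x
  S_antimul : ∀ x y : A, S (x * y) = S y * S x
  S_anticomul : ∀ x : A, Δ (S x) = (TensorProduct.comm ℂ A A) ((TensorProduct.map S S) (Δ x))
  S_star : ∀ x : A, star (S (star x)) = Sinv x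

/-- The set of elements commuting with everything. -/
def centerSet (R : Type) [Mul R] : Set R := {z | ∀ r : R, z * r = r * z}

namespace WeakHopfAlgebra

variable {A : Type} [Ring A] [Algebra ℂ A] [StarRing A] [StarModule ℂ A]

/-- `Σ x₍₁₎ · S(x₍₂₎)`. -/
def swIdS (W : WeakHopfAlgebra A) (x : A) : A :=
  LinearMap.mul' ℂ A ((TensorProduct.map (LinearMap.id : A →ₗ[ℂ] A) W.S) (W.Δ x))

/-- `Σ S(x₍₁₎) · x₍₂₎`. -/
def swSId (W : WeakHopfAlgebra A) (x : A) : A :=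
  LinearMap.mul' ℂ A ((TensorProduct.map W.S (LinearMap.id : A →ₗ[ℂ] A)) (W.Δ x))

/-- `Σ x₍₂₎ · S⁻¹(x₍₁₎)`. -/
def swIdSinv (W : WeakHopfAlgebra A) (x : A) : A :=
  LinearMap.mul' ℂ A
    ((TensorProduct.map (LinearMap.id : A →ₗ[ℂ] A) W.Sinv) ((TensorProduct.comm ℂ A A) (W.Δ x)))

/-- `Σ S⁻¹(x₍₂₎) · x₍₁₎`. -/
def swSinvId (W : WeakHopfAlgebra A) (x : A) : A :=
  LinearMap.mul' ℂ A
    ((TensorProduct.map W.Sinv (LinearMap.id : A →ₗ[ℂ] A)) ((TensorProduct.comm ℂ A A) (W.Δ x)))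

/-- The left subalgebra `A_L = {(φ ⊗ id)(Δ 1) : φ ∈ A*}`. -/
def AL (W : WeakHopfAlgebra A) : Set A :=
  {a | ∃ φ : A →ₗ[ℂ] ℂ,
    a = (TensorProduct.lid ℂ A) ((TensorProduct.map φ (LinearMap.id : A →ₗ[ℂ] A)) (W.Δ 1))}

/-- The right subalgebra `A_R = {(id ⊗ φ)(Δ 1) : φ ∈ A*}`. -/
def AR (W : WeakHopfAlgebra A) : Set A :=
  {a | ∃ φ : A →ₗ[ℂ] ℂ,
    a = (TensorProduct.rid ℂ A) ((TensorProduct.map (LinearMap.id : A →ₗ[ℂ] A) φ) (W.Δ 1))}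

/-- A left integral: `a · l = Σ a₍₁₎ S(a₍₂₎) · l` for all `a`. -/
def IsLeftIntegral (W : WeakHopfAlgebra A) (l : A) : Prop := ∀ a : A, a * l = W.swIdS a * l

/-- A right integral: `r · a = r · Σ S(a₍₁₎) a₍₂₎` for all `a`. -/
def IsRightIntegral (W : WeakHopfAlgebra A) (r : A) : Prop := ∀ a : A, r * a = r * W.swSId a

/-- A normalized Haar integral. -/
def IsHaar (W : WeakHopfAlgebra A) (h : A) : Prop :=
  W.IsLeftIntegral h ∧ W.IsRightIntegral h ∧ W.swSId h = 1 ∧ W.swIdS h = 1 ∧ W.S h = h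

/-- The canonical left action of a functional `λ ∈ A*` on `A`:
`λ ⇀ a = Σ a₍₁₎ · ⟨λ, a₍₂₎⟩`. -/
def lact (W : WeakHopfAlgebra A) (lam : A →ₗ[ℂ] ℂ) : A →ₗ[ℂ] A :=
  (TensorProduct.rid ℂ A).toLinearMap ∘ₗ
    (TensorProduct.map (LinearMap.id : A →ₗ[ℂ] A) lam) ∘ₗ W.Δ

/-- `λ ∈ A*` is a left integral of the dual weak Hopf algebra:
`λ ⇀ a ∈ A_L` for all `a ∈ A`. -/
def IsDualLeftIntegral (W : WeakHopfAlgebra A) (lam : A →ₗ[ℂ] ℂ) : Prop :=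
  ∀ a : A, W.lact lam a ∈ W.AL

/-- A dual pair of left integrals `(l, λ)`. -/
def IsDualPair (W : WeakHopfAlgebra A) (l : A) (lam : A →ₗ[ℂ] ℂ) : Prop :=
  W.IsLeftIntegral l ∧ W.IsDualLeftIntegral lam ∧
  W.lact lam l = 1 ∧
  (∀ a : A,
    (TensorProduct.rid ℂ A)
      ((TensorProduct.map (LinearMap.id : A →ₗ[ℂ] A) (lam ∘ₗ LinearMap.mulLeft ℂ a)) (W.Δ l))
      = W.S a) ∧
  (∀ a : A,
    (TensorProduct.lid ℂ A)
      ((TensorProduct.map (lam ∘ₗ LinearMap.mulRight ℂ a ∘ₗ W.Sinv)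
        (LinearMap.id : A →ₗ[ℂ] A)) (W.Δ l)) = a)

end WeakHopfAlgebra

/-- A (left) module `*`-algebra over a weak `*`-Hopf algebra. -/
structure ModuleAlgebra {A : Type} [Ring A] [Algebra ℂ A] [StarRing A] [StarModule ℂ A]
    (W : WeakHopfAlgebra A) (M : Type) [Ring M] [Algebra ℂ M] [StarRing M] [StarModule ℂ M] where
  act : A →ₗ[ℂ] M →ₗ[ℂ] M
  act_mul : ∀ (a b : A) (m : M), act (a * b) m = act a (act b m)
  act_one : ∀ m : M, act 1 m = m
  act_mul' : ∀ (a : A) (m n : M),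
    act a (m * n) = LinearMap.mul' ℂ M ((TensorProduct.map (act.flip m) (act.flip n)) (W.Δ a))
  act_star : ∀ (a : A) (m : M), star (act a m) = act (star (W.S a)) (star m)
  act_unit : ∀ a : A, act a 1 = act (W.swIdS a) 1

namespace ModuleAlgebra

variable {A : Type} [Ring A] [Algebra ℂ A] [StarRing A] [StarModule ℂ A]
variable {M : Type} [Ring M] [Algebra ℂ M] [StarRing M] [StarModule ℂ M]
variable {W : WeakHopfAlgebra A}

/-- `M_R = A ▷ 1_M`. -/
def MR (MA : ModuleAlgebra W M) : Set M := Set.range fun a : A => MA.act a 1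

/-- The fixed point algebra `M^A`. -/
def fixed (MA : ModuleAlgebra W M) : Set M :=
  {n | ∀ (a : A) (m : M), MA.act a (m * n) = MA.act a m * n}

end ModuleAlgebra

section Crossed

variable {A : Type} [Ring A] [Algebra ℂ A] [StarRing A] [StarModule ℂ A]
variable {M : Type} [Ring M] [Algebra ℂ M] [StarRing M] [StarModule ℂ M]
variable {W : WeakHopfAlgebra A}

/-- The subspace of `M ⊗ A` by which one divides to form the crossed product
`M ⋊ A = M ⊗_{A_L} A`. -/
def crossedRel (MA : ModuleAlgebra W M) : Submodule ℂ (M ⊗[ℂ] A) :=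
  Submodule.span ℂ
    {x | ∃ (m : M) (a b : A), b ∈ W.AL ∧
      x = (m * MA.act b 1) ⊗ₜ[ℂ] a - m ⊗ₜ[ℂ] (b * a)}

/-- The crossed product `M ⋊ A` as a vector space. -/
abbrev Crossed (MA : ModuleAlgebra W M) : Type := (M ⊗[ℂ] A) ⧸ crossedRel MA

/-- The canonical projection `M ⊗ A → M ⋊ A`; `cmk MA (m ⊗ₜ a)` is `m ⋊ a`. -/
def cmk (MA : ModuleAlgebra W M) : M ⊗[ℂ] A →ₗ[ℂ] Crossed MA := (crossedRel MA).mkQ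

/-- The embedding `M → M ⋊ A`, `m ↦ m ⋊ 1`. -/
def iM (MA : ModuleAlgebra W M) : M →ₗ[ℂ] Crossed MA :=
  cmk MA ∘ₗ (TensorProduct.mk ℂ M A).flip (1 : A)

/-- The map `A → M ⋊ A`, `a ↦ 1 ⋊ a`. -/
def iA (MA : ModuleAlgebra W M) : A →ₗ[ℂ] Crossed MA :=
  cmk MA ∘ₗ (TensorProduct.mk ℂ M A) (1 : M)

/-- The unit `1 ⋊ 1` of `M ⋊ A`. -/
def oneC (MA : ModuleAlgebra W M) : Crossed MA := cmk MA ((1 : M) ⊗ₜ[ℂ] (1 : A))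

/-- The multiplication of the crossed product `M ⋊ A`
(whose existence is the content of Theorem 3.1), as a bundled bilinear map
together with its defining formula on generators:
`(m ⋊ a)(m' ⋊ a') = Σ m (a₍₁₎ ▷ m') ⋊ a₍₂₎ a'`. -/
structure CrossedMul (MA : ModuleAlgebra W M) where
  mul : Crossed MA →ₗ[ℂ] Crossed MA →ₗ[ℂ] Crossed MA
  mul_def : ∀ (m m' : M) (a a' : A),
    mul (cmk MA (m ⊗ₜ[ℂ] a)) (cmk MA (m' ⊗ₜ[ℂ] a'))
      = cmk MA ((TensorProduct.map ((LinearMap.mulLeft ℂ m) ∘ₗ (MA.act.flip m'))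
          (LinearMap.mulRight ℂ a')) (W.Δ a))

/-- The star operation of the crossed product `M ⋊ A`
(whose existence is part of Theorem 3.1):
`(m ⋊ a)* = Σ (a₍₁₎* ▷ m*) ⋊ a₍₂₎*`. -/
structure CrossedStar (MA : ModuleAlgebra W M) where
  st : Crossed MA →+ Crossed MA
  st_smul : ∀ (c : ℂ) (x : Crossed MA), st (c • x) = (starRingEnd ℂ c) • st x
  st_def : ∀ (m : M) (a : A),
    st (cmk MA (m ⊗ₜ[ℂ] a))
      = cmk MA ((TensorProduct.map (MA.act.flip (star m)) (LinearMap.id : A →ₗ[ℂ] A))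
          (W.Δ (star a)))

/-- The multiplication on `(M ⋊ A) ⊗ B` induced by a crossed product
multiplication on `M ⋊ A` and the algebra structure of `B`. -/
def mulT (MA : ModuleAlgebra W M) (CS : CrossedMul MA) (B : Type) [Ring B] [Algebra ℂ B] :
    Crossed MA ⊗[ℂ] B →ₗ[ℂ] Crossed MA ⊗[ℂ] B →ₗ[ℂ] Crossed MA ⊗[ℂ] B :=
  TensorProduct.lift
    ((TensorProduct.mapBilinear (RingHom.id ℂ) (Crossed MA) B (Crossed MA) B).compl₁₂ CS.mul
      (LinearMap.mul ℂ B))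

end Crossed

section Helpers

set_option linter.unusedSectionVars false
set_option maxHeartbeats 1000000
set_option synthInstance.maxHeartbeats 400000

variable {A M : Type} [Ring A] [Algebra ℂ A] [StarRing A] [StarModule ℂ A]
  [Ring M] [Algebra ℂ M] [StarRing M] [StarModule ℂ M]
  (W : WeakHopfAlgebra A) (MA : ModuleAlgebra W M)

private lemma mul_tmul_right (u : A ⊗[ℂ] A) (d : A) :
    u * (d ⊗ₜ[ℂ] (1 : A)) =
      TensorProduct.map (LinearMap.mulRight ℂ d) (LinearMap.id : A →ₗ[ℂ] A) u := by
  induction u using TensorProduct.induction_on with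
  | zero => simp
  | tmul x y => simp [Algebra.TensorProduct.tmul_mul_tmul]
  | add x y hx hy => simp [add_mul, hx, hy]

private lemma mul_one_tmul (u : A ⊗[ℂ] A) (d : A) :
    u * ((1 : A) ⊗ₜ[ℂ] d) =
      TensorProduct.map (LinearMap.id : A →ₗ[ℂ] A) (LinearMap.mulRight ℂ d) u := by
  induction u using TensorProduct.induction_on with
  | zero => simp
  | tmul x y => simp [Algebra.TensorProduct.tmul_mul_tmul]
  | add x y hx hy => simp [mul_add, add_mul, hx, hy]

private lemma deltaContractL (φ : A →ₗ[ℂ] ℂ) (v : A ⊗[ℂ] A) :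
    W.Δ ((TensorProduct.lid ℂ A) ((TensorProduct.map φ (LinearMap.id : A →ₗ[ℂ] A)) v)) =
      (TensorProduct.lid ℂ (A ⊗[ℂ] A)) ((TensorProduct.map φ W.Δ) v) := by
  induction v using TensorProduct.induction_on with
  | zero => simp
  | tmul x y => simp
  | add x y hx hy => simp [hx, hy]

private lemma deltaContractR (ψ : A →ₗ[ℂ] ℂ) (v : A ⊗[ℂ] A) :
    W.Δ ((TensorProduct.rid ℂ A) ((TensorProduct.map (LinearMap.id : A →ₗ[ℂ] A) ψ) v)) =
      (TensorProduct.rid ℂ (A ⊗[ℂ] A)) ((TensorProduct.map W.Δ ψ) v) := by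
  induction v using TensorProduct.induction_on with
  | zero => simp
  | tmul x y => simp
  | add x y hx hy => simp [hx, hy]

private lemma auxL (φ : A →ₗ[ℂ] ℂ) (v w : A ⊗[ℂ] A) :
    (TensorProduct.lid ℂ (A ⊗[ℂ] A))
      ((TensorProduct.map φ (LinearMap.id : A ⊗[ℂ] A →ₗ[ℂ] A ⊗[ℂ] A))
        ((TensorProduct.assoc ℂ A A A)
          (((TensorProduct.assoc ℂ A A A).symm ((1 : A) ⊗ₜ[ℂ] v)) * (w ⊗ₜ[ℂ] (1 : A))))) =
    v * (((TensorProduct.lid ℂ A) ((TensorProduct.map φ (LinearMap.id : A →ₗ[ℂ] A)) w))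
          ⊗ₜ[ℂ] (1 : A)) := by
  induction v using TensorProduct.induction_on with
  | zero => simp
  | add v₁ v₂ h1 h2 =>
      simp only [TensorProduct.tmul_add, map_add, add_mul, h1, h2]
  | tmul p q =>
      induction w using TensorProduct.induction_on with
      | zero => simp
      | add w₁ w₂ g1 g2 =>
          simp only [TensorProduct.add_tmul, map_add, mul_add, add_mul, g1, g2,
            TensorProduct.tmul_add]
      | tmul r s =>
          simp only [TensorProduct.assoc_symm_tmul, Algebra.TensorProduct.tmul_mul_tmul,
            one_mul, mul_one, TensorProduct.assoc_tmul, TensorProduct.map_tmul,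
            TensorProduct.lid_tmul, LinearMap.id_coe, id_eq, TensorProduct.smul_tmul',
            smul_mul_assoc, mul_smul_comm]
          try simp only [TensorProduct.smul_tmul, TensorProduct.tmul_smul]

private lemma auxR (ψ : A →ₗ[ℂ] ℂ) (v w : A ⊗[ℂ] A) :
    (TensorProduct.rid ℂ (A ⊗[ℂ] A))
      ((TensorProduct.map (LinearMap.id : A ⊗[ℂ] A →ₗ[ℂ] A ⊗[ℂ] A) ψ)
        ((w ⊗ₜ[ℂ] (1 : A)) * ((TensorProduct.assoc ℂ A A A).symm ((1 : A) ⊗ₜ[ℂ] v)))) =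
    w * ((1 : A) ⊗ₜ[ℂ]
          ((TensorProduct.rid ℂ A) ((TensorProduct.map (LinearMap.id : A →ₗ[ℂ] A) ψ) v))) := by
  induction v using TensorProduct.induction_on with
  | zero => simp
  | add v₁ v₂ h1 h2 =>
      simp only [TensorProduct.tmul_add, map_add, mul_add, h1, h2]
  | tmul p q =>
      induction w using TensorProduct.induction_on with
      | zero => simp
      | add w₁ w₂ g1 g2 =>
          simp only [TensorProduct.add_tmul, map_add, add_mul, g1, g2]
      | tmul r s =>
          simp only [TensorProduct.assoc_symm_tmul, Algebra.TensorProduct.tmul_mul_tmul,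
            one_mul, mul_one, TensorProduct.map_tmul,
            TensorProduct.rid_tmul, LinearMap.id_coe, id_eq, TensorProduct.smul_tmul,
            smul_mul_assoc, mul_smul_comm]
          try simp only [TensorProduct.smul_tmul, TensorProduct.tmul_smul]

private lemma deltaL {d : A} (hd : d ∈ W.AL) :
    W.Δ d = W.Δ 1 * (d ⊗ₜ[ℂ] (1 : A)) := by
  obtain ⟨φ, rfl⟩ := hd
  rw [deltaContractL]
  have hc : TensorProduct.map φ W.Δ
      = TensorProduct.map φ (LinearMap.id : A ⊗[ℂ] A →ₗ[ℂ] A ⊗[ℂ] A) ∘ₗ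
          TensorProduct.map (LinearMap.id : A →ₗ[ℂ] A) W.Δ := by
    rw [← TensorProduct.map_comp, LinearMap.comp_id, LinearMap.id_comp]
  rw [hc, LinearMap.comp_apply, ← W.coassoc 1, ← W.unit_weak']
  exact auxL φ (W.Δ 1) (W.Δ 1)

private lemma deltaR {d : A} (hd : d ∈ W.AR) :
    W.Δ d = W.Δ 1 * ((1 : A) ⊗ₜ[ℂ] d) := by
  obtain ⟨ψ, rfl⟩ := hd
  rw [deltaContractR]
  have hc : TensorProduct.map W.Δ ψ
      = TensorProduct.map (LinearMap.id : A ⊗[ℂ] A →ₗ[ℂ] A ⊗[ℂ] A) ψ ∘ₗ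
          TensorProduct.map W.Δ (LinearMap.id : A →ₗ[ℂ] A) := by
    rw [← TensorProduct.map_comp, LinearMap.comp_id, LinearMap.id_comp]
  rw [hc, LinearMap.comp_apply, ← W.unit_weak]
  exact auxR ψ (W.Δ 1) (W.Δ 1)

private lemma flip_one_mulRight (d : A) :
    MA.act.flip (1 : M) ∘ₗ LinearMap.mulRight ℂ d = MA.act.flip (MA.act d 1) := by
  ext b
  simp [LinearMap.flip_apply, ← MA.act_mul]

private lemma actL {d : A} (hd : d ∈ W.AL) (m : M) :
    MA.act d m = MA.act d 1 * m := by
  calc MA.act d m = MA.act d (1 * m) := by rw [one_mul]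
    _ = LinearMap.mul' ℂ M
          ((TensorProduct.map (MA.act.flip 1) (MA.act.flip m)) (W.Δ d)) := MA.act_mul' d 1 m
    _ = LinearMap.mul' ℂ M
          ((TensorProduct.map (MA.act.flip 1) (MA.act.flip m))
            ((TensorProduct.map (LinearMap.mulRight ℂ d) (LinearMap.id : A →ₗ[ℂ] A))
              (W.Δ 1))) := by rw [deltaL W hd, mul_tmul_right]
    _ = LinearMap.mul' ℂ M
          ((TensorProduct.map (MA.act.flip (MA.act d 1)) (MA.act.flip m)) (W.Δ 1)) := by
        have hmap : TensorProduct.map (MA.act.flip (1 : M)) (MA.act.flip m) ∘ₗ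
              TensorProduct.map (LinearMap.mulRight ℂ d) (LinearMap.id : A →ₗ[ℂ] A)
            = TensorProduct.map (MA.act.flip (MA.act d 1)) (MA.act.flip m) := by
          rw [← TensorProduct.map_comp, flip_one_mulRight, LinearMap.comp_id]
        have := LinearMap.congr_fun hmap (W.Δ 1)
        rw [LinearMap.comp_apply] at this
        rw [this]
    _ = MA.act 1 (MA.act d 1 * m) := (MA.act_mul' 1 (MA.act d 1) m).symm
    _ = MA.act d 1 * m := MA.act_one _

private lemma actR {d : A} (hd : d ∈ W.AR) (m : M) :
    MA.act d m = m * MA.act d 1 := by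
  calc MA.act d m = MA.act d (m * 1) := by rw [mul_one]
    _ = LinearMap.mul' ℂ M
          ((TensorProduct.map (MA.act.flip m) (MA.act.flip 1)) (W.Δ d)) := MA.act_mul' d m 1
    _ = LinearMap.mul' ℂ M
          ((TensorProduct.map (MA.act.flip m) (MA.act.flip 1))
            ((TensorProduct.map (LinearMap.id : A →ₗ[ℂ] A) (LinearMap.mulRight ℂ d))
              (W.Δ 1))) := by rw [deltaR W hd, mul_one_tmul]
    _ = LinearMap.mul' ℂ M
          ((TensorProduct.map (MA.act.flip m) (MA.act.flip (MA.act d 1))) (W.Δ 1)) := by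
        have hmap : TensorProduct.map (MA.act.flip m) (MA.act.flip (1 : M)) ∘ₗ
              TensorProduct.map (LinearMap.id : A →ₗ[ℂ] A) (LinearMap.mulRight ℂ d)
            = TensorProduct.map (MA.act.flip m) (MA.act.flip (MA.act d 1)) := by
          rw [← TensorProduct.map_comp, flip_one_mulRight, LinearMap.comp_id]
        have := LinearMap.congr_fun hmap (W.Δ 1)
        rw [LinearMap.comp_apply] at this
        rw [this]
    _ = MA.act 1 (m * MA.act d 1) := (MA.act_mul' 1 m (MA.act d 1)).symm
    _ = m * MA.act d 1 := MA.act_one _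

private lemma swAL (b : A) : W.swIdS b ∈ W.AL :=
  ⟨W.ε ∘ₗ LinearMap.mulRight ℂ b, by
    unfold WeakHopfAlgebra.swIdS
    exact W.antipode_right b⟩

private lemma char_fwd {n : M} (hn : n ∈ MA.fixed) (b : A) :
    MA.act b n = MA.act b 1 * n := by
  have := hn b 1
  rwa [one_mul] at this

private lemma char_bwd {n : M} (h : ∀ b : A, MA.act b n = MA.act b 1 * n) :
    n ∈ MA.fixed := by
  intro a m
  have hflip : MA.act.flip n = LinearMap.mulRight ℂ n ∘ₗ MA.act.flip (1 : M) := by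
    ext b
    simp [LinearMap.flip_apply, h b]
  have key : ∀ u : M ⊗[ℂ] M,
      LinearMap.mul' ℂ M
        ((TensorProduct.map (LinearMap.id : M →ₗ[ℂ] M) (LinearMap.mulRight ℂ n)) u)
        = LinearMap.mul' ℂ M u * n := by
    intro u
    induction u using TensorProduct.induction_on with
    | zero => simp
    | tmul x y => simp [mul_assoc]
    | add x y hx hy => simp [add_mul, hx, hy]
  have hmap : TensorProduct.map (MA.act.flip m) (LinearMap.mulRight ℂ n ∘ₗ MA.act.flip 1)
      = TensorProduct.map (LinearMap.id : M →ₗ[ℂ] M) (LinearMap.mulRight ℂ n) ∘ₗ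
          TensorProduct.map (MA.act.flip m) (MA.act.flip (1 : M)) := by
    rw [← TensorProduct.map_comp, LinearMap.id_comp]
  rw [MA.act_mul', hflip, hmap, LinearMap.comp_apply, key, ← MA.act_mul', mul_one]

private lemma star_S (y : A) : star (W.S y) = W.Sinv (star y) := by
  have := W.S_star (star y)
  rwa [star_star] at this

private lemma star_Sinv_star (y : A) : star (W.Sinv (star y)) = W.S y := by
  rw [← star_S, star_star]

private lemma act_star' (b : A) (m : M) :
    MA.act b (star m) = star (MA.act (W.Sinv (star b)) m) := by
  rw [MA.act_star, W.S_Sinv, star_star]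

private lemma fixed_star {n : M} (hn : n ∈ MA.fixed) : star n ∈ MA.fixed := by
  have rform : ∀ b : A, MA.act b (star n) = star n * MA.act b 1 := by
    intro b
    rw [act_star' W MA b n, char_fwd W MA hn (W.Sinv (star b)), star_mul]
    congr 1
    rw [MA.act_star, W.S_Sinv, star_star, star_one]
  apply char_bwd
  intro b
  rw [rform b, MA.act_unit b, ← actL W MA (swAL W b) (star n), rform (W.swIdS b)]

private lemma act_leftfix (a : A) {n : M} (hn : n ∈ MA.fixed) (m : M) :
    MA.act a (n * m) = n * MA.act a m := by
  have h1 : star (MA.act a (n * m)) = MA.act (star (W.S a)) (star m) * star n := by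
    rw [MA.act_star, star_mul]
    exact fixed_star W MA hn (star (W.S a)) (star m)
  calc MA.act a (n * m) = star (star (MA.act a (n * m))) := (star_star _).symm
    _ = star (MA.act (star (W.S a)) (star m) * star n) := by rw [h1]
    _ = n * star (MA.act (star (W.S a)) (star m)) := by rw [star_mul, star_star]
    _ = n * MA.act a m := by
        rw [MA.act_star, star_star, star_S, star_star, W.Sinv_S]

private lemma act_int_fixed {l : A} (hl : W.IsLeftIntegral l) (m : M) :
    MA.act l m ∈ MA.fixed := by
  apply char_bwd
  intro b
  calc MA.act b (MA.act l m) = MA.act (b * l) m := (MA.act_mul b l m).symm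
    _ = MA.act (W.swIdS b * l) m := by rw [hl b]
    _ = MA.act (W.swIdS b) (MA.act l m) := MA.act_mul _ _ _
    _ = MA.act (W.swIdS b) 1 * MA.act l m := actL W MA (swAL W b) _
    _ = MA.act b 1 * MA.act l m := by rw [← MA.act_unit b]

end Helpers

/-- Theorem 2.26 of [NSW] (left integrals and conditional expectations):
for a left integral `l`, `E_l(m) = l ▷ m` maps `M` into `N = M^A` and is an
`N`-`N`-bimodule map; `E_{l·d}(m) = E_l((d ▷ 1)·m)` for `d ∈ A_L` and
`E_{l·d}(m) = E_l(m·(d ▷ 1))` for `d ∈ A_R`;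
`E_l(1) = (Σ l₍₁₎ S(l₍₂₎)) ▷ 1 ∈ C(N) ∩ M_R`; and if `l` is normalized then
`E_l` is an idempotent projection of `M` onto `N` restricting to the identity
on `N`. -/
theorem left_integral_conditional_expectation
    {A M : Type} [Ring A] [Algebra ℂ A] [StarRing A] [StarModule ℂ A]
    [Ring M] [Algebra ℂ M] [StarRing M] [StarModule ℂ M]
    (W : WeakHopfAlgebra A) (MA : ModuleAlgebra W M)
    (l : A) (hl : W.IsLeftIntegral l) :
    (∀ m : M, MA.act l m ∈ MA.fixed)
    ∧ (∀ n ∈ MA.fixed, ∀ n' ∈ MA.fixed, ∀ m : M,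
        MA.act l (n * m * n') = n * MA.act l m * n')
    ∧ (∀ d ∈ W.AL,
        W.IsLeftIntegral (l * d) ∧ ∀ m : M, MA.act (l * d) m = MA.act l (MA.act d 1 * m))
    ∧ (∀ d ∈ W.AR, ∀ m : M, MA.act (l * d) m = MA.act l (m * MA.act d 1))
    ∧ (MA.act l 1 = MA.act (W.swIdS l) 1
        ∧ MA.act l 1 ∈ MA.fixed
        ∧ (∀ n ∈ MA.fixed, MA.act l 1 * n = n * MA.act l 1)
        ∧ MA.act l 1 ∈ MA.MR)
    ∧ (W.swIdS l = 1 →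
        MA.act l 1 = 1
        ∧ (∀ n ∈ MA.fixed, MA.act l n = n)
        ∧ (∀ m : M, MA.act l (MA.act l m) = MA.act l m)
        ∧ Set.range (fun m : M => MA.act l m) = MA.fixed) := by
  refine ⟨fun m => act_int_fixed W MA hl m, ?_, ?_, ?_, ?_, ?_⟩
  · intro n hn n' hn' m
    calc MA.act l (n * m * n') = MA.act l (n * m) * n' := hn' l (n * m)
      _ = n * MA.act l m * n' := by rw [act_leftfix W MA l hn m]
  · intro d hd
    refine ⟨fun a => by rw [← mul_assoc, hl a, mul_assoc], fun m => ?_⟩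
    rw [MA.act_mul, actL W MA hd m]
  · intro d hd m
    rw [MA.act_mul, actR W MA hd m]
  · refine ⟨MA.act_unit l, act_int_fixed W MA hl 1, ?_, ⟨l, rfl⟩⟩
    intro n hn
    have h2 : MA.act l n = n * MA.act l 1 := by
      have := act_leftfix W MA l hn 1
      rwa [mul_one] at this
    rw [← char_fwd W MA hn l, h2]
  · intro h
    have e1 : MA.act l 1 = 1 := by rw [MA.act_unit l, h, MA.act_one]
    have e2 : ∀ n ∈ MA.fixed, MA.act l n = n := fun n hn => by
      rw [char_fwd W MA hn l, e1, one_mul]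
    refine ⟨e1, e2, fun m => e2 _ (act_int_fixed W MA hl m), ?_⟩
    refine Set.Subset.antisymm ?_ ?_
    · rintro x ⟨m, rfl⟩
      exact act_int_fixed W MA hl m
    · intro n hn
      exact ⟨n, e2 n hn⟩
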